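/- The K-matrix K(z) := k(z)·[[q^ζ−q^{−ζ}+(q^υ−q^{−υ})q^z, 1−q^{2z}],[1−q^{2z}, (q^ζ−q^{−ζ})q^{2z}+(q^υ−q^{−υ})q^z]] with k(z) = q^{−ζ}/((1−q^{−ζ−υ+z})(1+q^{−ζ+υ+z})) satisfies the boundary unitarity relation K(z)K(−z) = Id on ℂ². -/

import Mathlib

/-- The scalar function `k(z) = q^{-ζ}/((1-q^{-ζ-υ+z})(1+q^{-ζ+υ+z}))`. -/
noncomputable def kfun (q : ℝ) (ζ υ z : ℂ) : ℂ :=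
  (q : ℂ) ^ (-ζ) / ((1 - (q : ℂ) ^ (-ζ - υ + z)) * (1 + (q : ℂ) ^ (-ζ + υ + z)))

/-- The K-matrix
`K(z) = k(z)[[q^ζ-q^{-ζ}+(q^υ-q^{-υ})q^z, 1-q^{2z}],[1-q^{2z},(q^ζ-q^{-ζ})q^{2z}+(q^υ-q^{-υ})q^z]]`. -/
noncomputable def Kxxz (q : ℝ) (ζ υ z : ℂ) : Matrix (Fin 2) (Fin 2) ℂ :=
  kfun q ζ υ z •
    !![(q : ℂ) ^ ζ - (q : ℂ) ^ (-ζ) + ((q : ℂ) ^ υ - (q : ℂ) ^ (-υ)) * (q : ℂ) ^ z,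
        1 - (q : ℂ) ^ (2 * z);
       1 - (q : ℂ) ^ (2 * z),
       ((q : ℂ) ^ ζ - (q : ℂ) ^ (-ζ)) * (q : ℂ) ^ (2 * z) +
        ((q : ℂ) ^ υ - (q : ℂ) ^ (-υ)) * (q : ℂ) ^ z]

set_option maxHeartbeats 1000000 in
lemma Kxxz_aux (a b w : ℂ) (ha : a ≠ 0) (hb : b ≠ 0) (hw : w ≠ 0)
    (hd1 : a * b - w ≠ 0) (hd2 : a + b * w ≠ 0)
    (hd3 : a * b * w - 1 ≠ 0) (hd4 : a * w + b ≠ 0) :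
    ((a * b / ((a * b - w) * (a + b * w))) •
      !![a - a⁻¹ + (b - b⁻¹) * w, 1 - w * w; 1 - w * w,
         (a - a⁻¹) * (w * w) + (b - b⁻¹) * w]) *
    ((a * b * w ^ 2 / ((a * b * w - 1) * (a * w + b))) •
      !![a - a⁻¹ + (b - b⁻¹) * w⁻¹, 1 - w⁻¹ * w⁻¹; 1 - w⁻¹ * w⁻¹,
         (a - a⁻¹) * (w⁻¹ * w⁻¹) + (b - b⁻¹) * w⁻¹]) = 1 := by
  have hN1 : (!![a - a⁻¹ + (b - b⁻¹) * w, 1 - w * w; 1 - w * w,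
        (a - a⁻¹) * (w * w) + (b - b⁻¹) * w] : Matrix (Fin 2) (Fin 2) ℂ) =
      (a * b)⁻¹ • !![a ^ 2 * b - b + (a * b ^ 2 - a) * w, a * b * (1 - w * w);
        a * b * (1 - w * w), (a ^ 2 * b - b) * (w * w) + (a * b ^ 2 - a) * w] := by
    ext i j
    fin_cases i <;> fin_cases j <;>
      simp only [Matrix.smul_apply, Matrix.cons_val', Matrix.cons_val_zero,
        Matrix.cons_val_one, Matrix.head_cons, Matrix.head_fin_const, Matrix.empty_val',
        Matrix.cons_val_fin_one, Matrix.of_apply, smul_eq_mul, Fin.zero_eta, Fin.mk_one] <;>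
      field_simp <;> ring
  have hN2 : (!![a - a⁻¹ + (b - b⁻¹) * w⁻¹, 1 - w⁻¹ * w⁻¹; 1 - w⁻¹ * w⁻¹,
        (a - a⁻¹) * (w⁻¹ * w⁻¹) + (b - b⁻¹) * w⁻¹] : Matrix (Fin 2) (Fin 2) ℂ) =
      (a * b * w ^ 2)⁻¹ • !![(a ^ 2 * b - b) * (w * w) + (a * b ^ 2 - a) * w,
        a * b * (w * w - 1); a * b * (w * w - 1),
        a ^ 2 * b - b + (a * b ^ 2 - a) * w] := by
    ext i j
    fin_cases i <;> fin_cases j <;>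
      simp only [Matrix.smul_apply, Matrix.cons_val', Matrix.cons_val_zero,
        Matrix.cons_val_one, Matrix.head_cons, Matrix.head_fin_const, Matrix.empty_val',
        Matrix.cons_val_fin_one, Matrix.of_apply, smul_eq_mul, Fin.zero_eta, Fin.mk_one] <;>
      field_simp <;> ring
  have hNN : (!![a ^ 2 * b - b + (a * b ^ 2 - a) * w, a * b * (1 - w * w);
        a * b * (1 - w * w), (a ^ 2 * b - b) * (w * w) + (a * b ^ 2 - a) * w] :
        Matrix (Fin 2) (Fin 2) ℂ) *
      !![(a ^ 2 * b - b) * (w * w) + (a * b ^ 2 - a) * w, a * b * (w * w - 1);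
        a * b * (w * w - 1), a ^ 2 * b - b + (a * b ^ 2 - a) * w] =
      ((a * b - w) * (a + b * w) * (a * b * w - 1) * (a * w + b)) • 1 := by
    ext i j
    fin_cases i <;> fin_cases j <;>
      simp only [Matrix.mul_apply, Fin.sum_univ_two, Matrix.smul_apply,
        Matrix.cons_val', Matrix.cons_val_zero, Matrix.cons_val_one, Matrix.head_cons,
        Matrix.head_fin_const, Matrix.empty_val', Matrix.cons_val_fin_one, Matrix.of_apply,
        smul_eq_mul, Matrix.one_apply_eq, Matrix.one_apply_ne, ne_eq, Fin.zero_eta,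
        Fin.mk_one, zero_ne_one, one_ne_zero, not_false_eq_true, mul_zero, mul_one] <;>
      ring
  rw [hN1, hN2]
  simp only [Matrix.smul_mul, Matrix.mul_smul, hNN, smul_smul]
  have key : ∀ x : ℂ, x = 1 → x • (1 : Matrix (Fin 2) (Fin 2) ℂ) = 1 := by
    rintro x rfl; rw [one_smul]
  apply key
  revert hd1 hd2 hd3 hd4
  generalize a * b - w = p
  generalize a + b * w = q
  generalize a * b * w - 1 = r
  generalize a * w + b = s
  intro hd1 hd2 hd3 hd4
  field_simp

/-- Boundary unitarity of the K-matrix: `K(z)K(-z) = Id` on `ℂ²`. -/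
theorem Kxxz_unitarity (q : ℝ) (hq : 0 < q) (hq1 : q < 1) (ζ υ z : ℂ)
    (h1 : 1 - (q : ℂ) ^ (-ζ - υ + z) ≠ 0) (h2 : 1 + (q : ℂ) ^ (-ζ + υ + z) ≠ 0)
    (h3 : 1 - (q : ℂ) ^ (-ζ - υ + -z) ≠ 0) (h4 : 1 + (q : ℂ) ^ (-ζ + υ + -z) ≠ 0) :
    Kxxz q ζ υ z * Kxxz q ζ υ (-z) = 1 := by
  have hq0 : (q : ℂ) ≠ 0 := by exact_mod_cast hq.ne'
  set a := (q : ℂ) ^ ζ with had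
  set b := (q : ℂ) ^ υ with hbd
  set w := (q : ℂ) ^ z with hwd
  have ha : a ≠ 0 := by simp [had, Complex.cpow_eq_zero_iff, hq0]
  have hb : b ≠ 0 := by simp [hbd, Complex.cpow_eq_zero_iff, hq0]
  have hw : w ≠ 0 := by simp [hwd, Complex.cpow_eq_zero_iff, hq0]
  have e1c : (q : ℂ) ^ (-ζ - υ + z) = a⁻¹ * b⁻¹ * w := by
    rw [show -ζ - υ + z = -ζ + -υ + z by ring]
    simp [Complex.cpow_add _ _ hq0, Complex.cpow_neg, had, hbd, hwd]
  have e2c : (q : ℂ) ^ (-ζ + υ + z) = a⁻¹ * b * w := by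
    simp [Complex.cpow_add _ _ hq0, Complex.cpow_neg, had, hbd, hwd]
  have e3c : (q : ℂ) ^ (-ζ - υ + -z) = a⁻¹ * b⁻¹ * w⁻¹ := by
    rw [show -ζ - υ + -z = -ζ + -υ + -z by ring]
    simp [Complex.cpow_add _ _ hq0, Complex.cpow_neg, had, hbd, hwd]
  have e4c : (q : ℂ) ^ (-ζ + υ + -z) = a⁻¹ * b * w⁻¹ := by
    simp [Complex.cpow_add _ _ hq0, Complex.cpow_neg, had, hbd, hwd]
  rw [e1c] at h1; rw [e2c] at h2; rw [e3c] at h3; rw [e4c] at h4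
  have hd1 : a * b - w ≠ 0 := by
    have : a * b - w = a * b * (1 - a⁻¹ * b⁻¹ * w) := by field_simp
    rw [this]; exact mul_ne_zero (mul_ne_zero ha hb) h1
  have hd2 : a + b * w ≠ 0 := by
    have : a + b * w = a * (1 + a⁻¹ * b * w) := by field_simp
    rw [this]; exact mul_ne_zero ha h2
  have hd3 : a * b * w - 1 ≠ 0 := by
    have : a * b * w - 1 = a * b * w * (1 - a⁻¹ * b⁻¹ * w⁻¹) := by field_simp
    rw [this]; exact mul_ne_zero (mul_ne_zero (mul_ne_zero ha hb) hw) h3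
  have hd4 : a * w + b ≠ 0 := by
    have : a * w + b = a * w * (1 + a⁻¹ * b * w⁻¹) := by field_simp
    rw [this]; exact mul_ne_zero (mul_ne_zero ha hw) h4
  have e1 : Kxxz q ζ υ z = (a * b / ((a * b - w) * (a + b * w))) •
      !![a - a⁻¹ + (b - b⁻¹) * w, 1 - w * w; 1 - w * w,
         (a - a⁻¹) * (w * w) + (b - b⁻¹) * w] := by
    unfold Kxxz kfun
    rw [show (2 : ℂ) * z = z + z by ring, show -ζ - υ + z = -ζ + -υ + z by ring]
    simp only [Complex.cpow_add _ _ hq0, Complex.cpow_neg, ← had, ← hbd, ← hwd]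
    congr 1
    rw [div_eq_div_iff (mul_ne_zero h1 h2) (mul_ne_zero hd1 hd2)]
    field_simp
  have e2 : Kxxz q ζ υ (-z) = (a * b * w ^ 2 / ((a * b * w - 1) * (a * w + b))) •
      !![a - a⁻¹ + (b - b⁻¹) * w⁻¹, 1 - w⁻¹ * w⁻¹; 1 - w⁻¹ * w⁻¹,
         (a - a⁻¹) * (w⁻¹ * w⁻¹) + (b - b⁻¹) * w⁻¹] := by
    unfold Kxxz kfun
    rw [show (2 : ℂ) * -z = -z + -z by ring, show -ζ - υ + -z = -ζ + -υ + -z by ring]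
    simp only [Complex.cpow_add _ _ hq0, Complex.cpow_neg, ← had, ← hbd, ← hwd]
    congr 1
    rw [div_eq_div_iff (mul_ne_zero h3 h4) (mul_ne_zero hd3 hd4)]
    field_simp
  rw [e1, e2]
  exact Kxxz_aux a b w ha hb hw hd1 hd2 hd3 hd4
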